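/- Uniqueness of the Shapley value: any map ψ assigning to each game v : Finset (Fin d) → ℝ (with v(∅)=0) a vector ψ(v) ∈ ℝ^d that satisfies efficiency, linearity, the null player property, and symmetry must equal the Shapley value φ. -/

import Mathlib

open Finset

noncomputable def shapley (d : ℕ) (v : Finset (Fin d) → ℝ) (j : Fin d) : ℝ :=
  ∑ S ∈ (Finset.univ.erase j).powerset,
    ((Nat.factorial S.card * Nat.factorial (d - S.card - 1) : ℝ) / (Nat.factorial d : ℝ)) *
      (v (insert j S) - v S)

/-! ### Auxiliary definitions and lemmas -/

/-- Unanimity game `u_T`. -/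
noncomputable def shapUnan {d : ℕ} (T : Finset (Fin d)) : Finset (Fin d) → ℝ :=
  fun S => if T ⊆ S then 1 else 0

/-- Möbius coefficients of a game. -/
noncomputable def shapCoef {d : ℕ} (v : Finset (Fin d) → ℝ) (T : Finset (Fin d)) : ℝ :=
  ∑ A ∈ T.powerset, (-1:ℝ)^(T.card - A.card) * v A

lemma shapUnan_empty {d : ℕ} {T : Finset (Fin d)} (hT : T.Nonempty) : shapUnan T ∅ = 0 := by
  unfold shapUnan
  rw [if_neg]
  rw [Finset.subset_empty]
  exact hT.ne_empty

lemma shapAux_inner_sum {d : ℕ} (A S : Finset (Fin d)) (hA : A ⊆ S) :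
    ∑ T ∈ S.powerset.filter (fun T => A ⊆ T), (-1:ℝ)^(T.card - A.card)
      = if A = S then 1 else 0 := by
  have h1 : ∑ T ∈ S.powerset.filter (fun T => A ⊆ T), (-1:ℝ)^(T.card - A.card)
      = ∑ B ∈ (S \ A).powerset, (-1:ℝ)^B.card := by
    refine Finset.sum_nbij' (fun T => T \ A) (fun B => A ∪ B) ?_ ?_ ?_ ?_ ?_
    · intro T hT
      simp only [mem_filter, mem_powerset] at hT
      exact mem_powerset.2 (sdiff_subset_sdiff hT.1 Subset.rfl)
    · intro B hB
      simp only [mem_powerset] at hB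
      refine mem_filter.2 ⟨mem_powerset.2 (union_subset hA (hB.trans (sdiff_subset))), subset_union_left⟩
    · intro T hT
      simp only [mem_filter, mem_powerset] at hT
      exact union_sdiff_of_subset hT.2
    · intro B hB
      simp only [mem_powerset] at hB
      have : Disjoint A B := disjoint_sdiff.mono_right hB
      exact union_sdiff_cancel_left this
    · intro T hT
      simp only [mem_filter, mem_powerset] at hT
      rw [card_sdiff_of_subset hT.2]
  rw [h1]
  have h2 : ∑ B ∈ (S \ A).powerset, (-1:ℝ)^B.card
      = ((∑ B ∈ (S \ A).powerset, (-1:ℤ)^B.card : ℤ) : ℝ) := by push_cast; rfl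
  rw [h2, Finset.sum_powerset_neg_one_pow_card]
  have h3 : S \ A = ∅ ↔ A = S := by
    rw [sdiff_eq_empty_iff_subset]
    exact ⟨fun h => Subset.antisymm hA h, fun h => h ▸ Subset.rfl⟩
  by_cases h : A = S <;> simp [h, h3]

lemma shapAux_mobius {d : ℕ} (v : Finset (Fin d) → ℝ) (S : Finset (Fin d)) :
    ∑ T ∈ S.powerset, shapCoef v T = v S := by
  unfold shapCoef
  rw [Finset.sum_comm' (t' := S.powerset)
    (s' := fun A => S.powerset.filter (fun T => A ⊆ T))
    (t := fun T => T.powerset) ?_]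
  · have : ∀ A ∈ S.powerset,
        ∑ T ∈ S.powerset.filter (fun T => A ⊆ T), (-1:ℝ)^(T.card - A.card) * v A
          = (if A = S then 1 else 0) * v A := by
      intro A hA
      rw [← Finset.sum_mul, shapAux_inner_sum A S (mem_powerset.1 hA)]
    rw [Finset.sum_congr rfl this]
    simp [Finset.sum_ite_eq' S.powerset S]
  · intro T A
    simp only [mem_powerset, mem_filter, mem_powerset]
    constructor
    · rintro ⟨h1, h2⟩; exact ⟨⟨h1, h2⟩, h2.trans h1⟩
    · rintro ⟨⟨h1, h2⟩, _⟩; exact ⟨h1, h2⟩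

lemma shapAux_coef_empty {d : ℕ} (v : Finset (Fin d) → ℝ) (hv : v ∅ = 0) :
    shapCoef v (∅ : Finset (Fin d)) = 0 := by
  have := shapAux_mobius v (∅ : Finset (Fin d))
  simpa [hv] using this

lemma shapAux_decomp {d : ℕ} (v : Finset (Fin d) → ℝ) (hv : v ∅ = 0) (S : Finset (Fin d)) :
    v S = ∑ T ∈ (univ : Finset (Fin d)).powerset.erase ∅, shapCoef v T * shapUnan T S := by
  have h1 : ∀ T ∈ (univ : Finset (Fin d)).powerset.erase ∅,
      shapCoef v T * shapUnan T S = if T ⊆ S then shapCoef v T else 0 := by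
    intro T _
    unfold shapUnan
    split <;> simp
  rw [Finset.sum_congr rfl h1, Finset.sum_ite, Finset.sum_const_zero, add_zero]
  have h2 : ((univ : Finset (Fin d)).powerset.erase ∅).filter (fun T => T ⊆ S)
      = S.powerset.erase ∅ := by
    ext T
    simp only [mem_filter, mem_erase, mem_powerset]
    constructor
    · rintro ⟨⟨hne, _⟩, hsub⟩; exact ⟨hne, hsub⟩
    · rintro ⟨hne, hsub⟩; exact ⟨⟨hne, subset_univ T⟩, hsub⟩
  rw [h2]
  rw [Finset.sum_erase_eq_sub (mem_powerset.2 (empty_subset S)), shapAux_mobius,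
    shapAux_coef_empty v hv, sub_zero]

lemma shapAux_key (t m : ℕ) (ht : 1 ≤ t) :
    ∑ i ∈ range (m+1),
      ((m.choose i : ℝ)) * (((t-1+i).factorial * (m-i).factorial : ℕ) / ((t+m).factorial : ℝ))
      = 1 / t := by
  have hterm : ∀ i ∈ range (m+1),
      ((m.choose i : ℝ)) * (((t-1+i).factorial * (m-i).factorial : ℕ) / ((t+m).factorial : ℝ))
        = (m.factorial * (t-1).factorial : ℕ) * ((t-1+i).choose (t-1) : ℝ)
          / ((t+m).factorial : ℝ) := by
    intro i hi
    rw [mem_range, Nat.lt_succ_iff] at hi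
    have hnat : m.choose i * ((t-1+i).factorial * (m-i).factorial) * i.factorial
        = m.factorial * (t-1).factorial * (t-1+i).choose (t-1) * i.factorial := by
      have h1 : m.choose i * i.factorial * (m-i).factorial = m.factorial :=
        Nat.choose_mul_factorial_mul_factorial hi
      have h2 : (t-1+i).choose (t-1) * (t-1).factorial * i.factorial = (t-1+i).factorial := by
        have := Nat.choose_mul_factorial_mul_factorial (Nat.le_add_right (t-1) i)
        simpa using this
      calc m.choose i * ((t-1+i).factorial * (m-i).factorial) * i.factorial
          = (m.choose i * i.factorial * (m-i).factorial) * (t-1+i).factorial := by ring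
        _ = m.factorial * ((t-1+i).choose (t-1) * (t-1).factorial * i.factorial) := by
            rw [h1, h2]
        _ = m.factorial * (t-1).factorial * (t-1+i).choose (t-1) * i.factorial := by ring
    have hnat2 : m.choose i * ((t-1+i).factorial * (m-i).factorial)
        = m.factorial * (t-1).factorial * (t-1+i).choose (t-1) :=
      Nat.eq_of_mul_eq_mul_right (Nat.factorial_pos i) hnat
    have hcast : ((m.choose i : ℝ)) * ((t-1+i).factorial * (m-i).factorial : ℝ)
        = (m.factorial : ℝ) * (t-1).factorial * (t-1+i).choose (t-1) := by
      exact_mod_cast congrArg (Nat.cast (R := ℝ)) hnat2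
    push_cast
    rw [← mul_div_assoc, hcast]
  rw [Finset.sum_congr rfl hterm]
  rw [← Finset.sum_div, ← Finset.mul_sum]
  have hhs : ∑ i ∈ range (m+1), ((t-1+i).choose (t-1) : ℝ) = ((t+m).choose t : ℝ) := by
    have hn : ∑ i ∈ range (m+1), (t-1+i).choose (t-1) = (t+m).choose t := by
      have hbij : ∑ n ∈ Icc (t-1) (t-1+m), n.choose (t-1)
          = ∑ i ∈ range (m+1), (t-1+i).choose (t-1) := by
        rw [← Finset.Ico_add_one_right_eq_Icc, Finset.sum_Ico_eq_sum_range]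
        have h5 : t - 1 + m + 1 - (t - 1) = m + 1 := by omega
        rw [h5]
      rw [← hbij, Nat.sum_Icc_choose]
      congr 1 <;> omega
    exact_mod_cast congrArg (Nat.cast (R := ℝ)) hn
  rw [hhs]
  have hfacn : (t+m).choose t * t.factorial * m.factorial = (t+m).factorial := by
    have := Nat.choose_mul_factorial_mul_factorial (Nat.le_add_right t m)
    simpa using this
  have hfac : ((t+m).choose t : ℝ) * t.factorial * m.factorial = ((t+m).factorial : ℝ) := by
    exact_mod_cast congrArg (Nat.cast (R := ℝ)) hfacn
  have htfac : (t : ℝ) * (t-1).factorial = t.factorial := by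
    exact_mod_cast congrArg (Nat.cast (R := ℝ)) (Nat.mul_factorial_pred (by omega : t ≠ 0))
  have hF : ((t+m).factorial : ℝ) ≠ 0 := by positivity
  have htR : (t : ℝ) ≠ 0 := by positivity
  rw [div_eq_div_iff hF htR]
  push_cast
  rw [one_mul, ← hfac, ← htfac]
  ring

lemma shapley_unan_not_mem {d : ℕ} (T : Finset (Fin d)) (j : Fin d) (hj : j ∉ T) :
    shapley d (shapUnan T) j = 0 := by
  unfold shapley
  refine Finset.sum_eq_zero fun S _ => ?_
  have : shapUnan T (insert j S) = shapUnan T S := by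
    simp [shapUnan, subset_insert_iff_of_notMem hj]
  rw [this, sub_self, mul_zero]

lemma shapley_unan_mem {d : ℕ} (T : Finset (Fin d)) (j : Fin d) (hj : j ∈ T) :
    shapley d (shapUnan T) j = 1 / (T.card : ℝ) := by
  have ht1 : 1 ≤ T.card := card_pos.2 ⟨j, hj⟩
  have htd : T.card ≤ d := by
    simpa using card_le_card (subset_univ T)
  unfold shapley
  have hstep1 : ∀ S ∈ (Finset.univ.erase j).powerset,
      ((Nat.factorial S.card * Nat.factorial (d - S.card - 1) : ℝ) / (Nat.factorial d : ℝ)) *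
        (shapUnan T (insert j S) - shapUnan T S)
      = if T.erase j ⊆ S then
          ((Nat.factorial S.card * Nat.factorial (d - S.card - 1) : ℝ) / (Nat.factorial d : ℝ))
        else 0 := by
    intro S hS
    have hjS : j ∉ S := fun h => (mem_erase.1 ((mem_powerset.1 hS) h)).1 rfl
    have h0 : shapUnan T S = 0 := by
      simp only [shapUnan, if_neg (fun h : T ⊆ S => hjS (h hj))]
    have h1 : shapUnan T (insert j S) = if T.erase j ⊆ S then 1 else 0 := by
      simp [shapUnan, Finset.subset_insert_iff]
    rw [h0, h1]
    split <;> simp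
  rw [Finset.sum_congr rfl hstep1, Finset.sum_ite, Finset.sum_const_zero, add_zero]
  set E := T.erase j with hE
  set U := (univ : Finset (Fin d)) \ T with hU
  have hEcard : E.card = T.card - 1 := card_erase_of_mem hj
  have hbij : ∑ S ∈ ((Finset.univ.erase j).powerset.filter (fun S => E ⊆ S)),
      ((Nat.factorial S.card * Nat.factorial (d - S.card - 1) : ℝ) / (Nat.factorial d : ℝ))
      = ∑ B ∈ U.powerset,
      ((Nat.factorial (T.card - 1 + B.card) * Nat.factorial (d - (T.card - 1 + B.card) - 1) : ℝ)
        / (Nat.factorial d : ℝ)) := by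
    refine Finset.sum_nbij' (fun S => S \ E) (fun B => E ∪ B) ?_ ?_ ?_ ?_ ?_
    · intro S hS
      simp only [mem_filter, mem_powerset] at hS
      refine mem_powerset.2 fun x hx => ?_
      simp only [mem_sdiff] at hx
      simp only [hU, mem_sdiff, mem_univ, true_and]
      intro hxT
      have hxj : x ≠ j := fun h => (mem_erase.1 (hS.1 hx.1) ).1 (h ▸ rfl)
      exact hx.2 (mem_erase.2 ⟨hxj, hxT⟩)
    · intro B hB
      simp only [mem_powerset] at hB
      refine mem_filter.2 ⟨mem_powerset.2 fun x hx => ?_, subset_union_left⟩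
      rcases mem_union.1 hx with h | h
      · have := mem_erase.1 h
        exact mem_erase.2 ⟨this.1, mem_univ x⟩
      · have := hB h
        simp only [hU, mem_sdiff] at this
        refine mem_erase.2 ⟨fun hxj => this.2 (hxj ▸ hj), mem_univ x⟩
    · intro S hS
      simp only [mem_filter, mem_powerset] at hS
      exact union_sdiff_of_subset hS.2
    · intro B hB
      simp only [mem_powerset] at hB
      have hdisj : Disjoint E B := by
        refine Finset.disjoint_left.2 fun x hxE hxB => ?_
        have := hB hxB
        simp only [hU, mem_sdiff] at this
        exact this.2 (erase_subset _ _ hxE)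
      exact union_sdiff_cancel_left hdisj
    · intro S hS
      simp only [mem_filter, mem_powerset] at hS
      have hdisj : Disjoint E (S \ E) := disjoint_sdiff
      have : S = E ∪ (S \ E) := (union_sdiff_of_subset hS.2).symm
      have hcard : S.card = E.card + (S \ E).card := by
        conv_lhs => rw [this]
        exact card_union_of_disjoint hdisj
      rw [hcard, hEcard]
  rw [hbij]
  have hUcard : U.card = d - T.card := by
    rw [hU, card_sdiff_of_subset (subset_univ T)]
    simp
  rw [Finset.sum_powerset_apply_card
    (fun b => ((Nat.factorial (T.card - 1 + b) * Nat.factorial (d - (T.card - 1 + b) - 1) : ℝ)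
        / (Nat.factorial d : ℝ))), hUcard]
  set t := T.card
  set m := d - t with hm
  have hd : d = t + m := by omega
  have hsum : ∀ i ∈ range (m+1),
      (m.choose i) • ((Nat.factorial (t - 1 + i) * Nat.factorial (d - (t - 1 + i) - 1) : ℝ)
        / (Nat.factorial d : ℝ))
      = ((m.choose i : ℝ)) * (((t-1+i).factorial * (m-i).factorial : ℕ) / ((t+m).factorial : ℝ)) := by
    intro i hi
    rw [mem_range, Nat.lt_succ_iff] at hi
    have h1 : d - (t - 1 + i) - 1 = m - i := by omega
    rw [nsmul_eq_mul, h1, ← hd]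
    push_cast
    ring
  rw [Finset.sum_congr rfl hsum, shapAux_key t m ht1]

lemma shapley_sum {d : ℕ} (P : Finset (Finset (Fin d))) (c : Finset (Fin d) → ℝ)
    (w : Finset (Fin d) → Finset (Fin d) → ℝ) (j : Fin d) :
    shapley d (fun S => ∑ T ∈ P, c T * w T S) j = ∑ T ∈ P, c T * shapley d (w T) j := by
  unfold shapley
  simp only
  have hstep : ∀ S ∈ (Finset.univ.erase j).powerset,
      ((Nat.factorial S.card * Nat.factorial (d - S.card - 1) : ℝ) / (Nat.factorial d : ℝ)) *
        ((∑ T ∈ P, c T * w T (insert j S)) - ∑ T ∈ P, c T * w T S)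
      = ∑ T ∈ P, c T *
          (((Nat.factorial S.card * Nat.factorial (d - S.card - 1) : ℝ) / (Nat.factorial d : ℝ)) *
            (w T (insert j S) - w T S)) := by
    intro S _
    rw [← Finset.sum_sub_distrib, Finset.mul_sum]
    refine Finset.sum_congr rfl fun T _ => ?_
    ring
  rw [Finset.sum_congr rfl hstep, Finset.sum_comm]
  refine Finset.sum_congr rfl fun T _ => ?_
  rw [Finset.mul_sum]

section Psi
variable {d : ℕ} (ψ : (Finset (Fin d) → ℝ) → Fin d → ℝ)

lemma psi_unan_not_mem
    (hnull : ∀ (v : Finset (Fin d) → ℝ), v ∅ = 0 →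
      ∀ j : Fin d, (∀ S : Finset (Fin d), j ∉ S → v (insert j S) = v S) → ψ v j = 0)
    (T : Finset (Fin d)) (hT : T.Nonempty) (j : Fin d) (hj : j ∉ T) :
    ψ (shapUnan T) j = 0 := by
  refine hnull _ (shapUnan_empty hT) j fun S _ => ?_
  simp [shapUnan, subset_insert_iff_of_notMem hj]

lemma psi_unan_mem
    (heff : ∀ v : Finset (Fin d) → ℝ, v ∅ = 0 → ∑ j : Fin d, ψ v j = v Finset.univ)
    (hnull : ∀ (v : Finset (Fin d) → ℝ), v ∅ = 0 →
      ∀ j : Fin d, (∀ S : Finset (Fin d), j ∉ S → v (insert j S) = v S) → ψ v j = 0)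
    (hsym : ∀ (v : Finset (Fin d) → ℝ), v ∅ = 0 → ∀ j k : Fin d, j ≠ k →
      (∀ S : Finset (Fin d), j ∉ S → k ∉ S → v (insert j S) = v (insert k S)) →
      ψ v j = ψ v k)
    (T : Finset (Fin d)) (j : Fin d) (hj : j ∈ T) :
    ψ (shapUnan T) j = 1 / (T.card : ℝ) := by
  have hT : T.Nonempty := ⟨j, hj⟩
  have hval : ∀ k ∈ T, ψ (shapUnan T) k = ψ (shapUnan T) j := by
    intro k hk
    rcases eq_or_ne k j with rfl | hkj
    · rfl
    · refine hsym _ (shapUnan_empty hT) k j hkj fun S hkS hjS => ?_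
      have h1 : ¬ T ⊆ insert k S := fun h => by
        rcases mem_insert.1 (h hj) with h' | h'
        · exact hkj h'.symm
        · exact hjS h'
      have h2 : ¬ T ⊆ insert j S := fun h => by
        rcases mem_insert.1 (h hk) with h' | h'
        · exact hkj h'
        · exact hkS h'
      simp [shapUnan, h1, h2]
  have htot := heff (shapUnan T) (shapUnan_empty hT)
  have huniv : shapUnan T (univ : Finset (Fin d)) = 1 := by
    simp [shapUnan, subset_univ]
  rw [huniv] at htot
  have hsplit : ∑ k : Fin d, ψ (shapUnan T) k
      = ∑ k ∈ T, ψ (shapUnan T) k + ∑ k ∈ ((univ : Finset (Fin d)) \ T), ψ (shapUnan T) k := by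
    rw [← Finset.sum_union (disjoint_sdiff)]
    congr 1
    rw [Finset.union_sdiff_of_subset (subset_univ T)]
  have hzero : ∑ k ∈ ((univ : Finset (Fin d)) \ T), ψ (shapUnan T) k = 0 := by
    refine Finset.sum_eq_zero fun k hk => ?_
    have : k ∉ T := (mem_sdiff.1 hk).2
    exact psi_unan_not_mem ψ hnull T hT k this
  have hTsum : ∑ k ∈ T, ψ (shapUnan T) k = (T.card : ℝ) * ψ (shapUnan T) j := by
    rw [Finset.sum_congr rfl hval, Finset.sum_const, nsmul_eq_mul]
  rw [hsplit, hzero, add_zero, hTsum] at htot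
  have hc : (T.card : ℝ) ≠ 0 := by
    simp [Finset.card_ne_zero_of_mem hj]
  field_simp at htot ⊢
  linarith [htot]

lemma psi_sum
    (hlin : ∀ (a b : ℝ) (v₁ v₂ : Finset (Fin d) → ℝ), v₁ ∅ = 0 → v₂ ∅ = 0 →
      ∀ j : Fin d, ψ (fun S => a * v₁ S + b * v₂ S) j = a * ψ v₁ j + b * ψ v₂ j)
    (P : Finset (Finset (Fin d))) (hP : ∀ T ∈ P, T.Nonempty)
    (c : Finset (Fin d) → ℝ) (j : Fin d) :
    ψ (fun S => ∑ T ∈ P, c T * shapUnan T S) j = ∑ T ∈ P, c T * ψ (shapUnan T) j := by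
  classical
  induction P using Finset.induction_on with
  | empty =>
    have h := hlin 0 0 (fun _ => 0) (fun _ => 0) rfl rfl j
    simpa using h
  | @insert T0 P hT0P ih =>
    have hT0 : T0.Nonempty := hP T0 (mem_insert_self T0 P)
    have hP' : ∀ T ∈ P, T.Nonempty := fun T hT => hP T (mem_insert_of_mem hT)
    have hpart : (fun S => ∑ T ∈ P, c T * shapUnan T S) ∅ = 0 := by
      refine Finset.sum_eq_zero fun T hT => ?_
      rw [shapUnan_empty (hP' T hT), mul_zero]
    have h := hlin (c T0) 1 (shapUnan T0) (fun S => ∑ T ∈ P, c T * shapUnan T S)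
      (shapUnan_empty hT0) hpart j
    have heq : (fun S => c T0 * shapUnan T0 S + 1 * ∑ T ∈ P, c T * shapUnan T S)
        = fun S => ∑ T ∈ insert T0 P, c T * shapUnan T S := by
      funext S
      rw [Finset.sum_insert hT0P, one_mul]
    rw [heq] at h
    rw [h, ih hP', Finset.sum_insert hT0P, one_mul]

end Psi

theorem shapley_unique (d : ℕ) (hd : 0 < d)
    (ψ : (Finset (Fin d) → ℝ) → Fin d → ℝ)
    (heff : ∀ v : Finset (Fin d) → ℝ, v ∅ = 0 → ∑ j : Fin d, ψ v j = v Finset.univ)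
    (hlin : ∀ (a b : ℝ) (v₁ v₂ : Finset (Fin d) → ℝ), v₁ ∅ = 0 → v₂ ∅ = 0 →
      ∀ j : Fin d, ψ (fun S => a * v₁ S + b * v₂ S) j = a * ψ v₁ j + b * ψ v₂ j)
    (hnull : ∀ (v : Finset (Fin d) → ℝ), v ∅ = 0 →
      ∀ j : Fin d, (∀ S : Finset (Fin d), j ∉ S → v (insert j S) = v S) → ψ v j = 0)
    (hsym : ∀ (v : Finset (Fin d) → ℝ), v ∅ = 0 → ∀ j k : Fin d, j ≠ k →
      (∀ S : Finset (Fin d), j ∉ S → k ∉ S → v (insert j S) = v (insert k S)) →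
      ψ v j = ψ v k) :
    ∀ v : Finset (Fin d) → ℝ, v ∅ = 0 → ∀ j : Fin d, ψ v j = shapley d v j := by
  intro v hv0 j
  set P : Finset (Finset (Fin d)) := (univ : Finset (Fin d)).powerset.erase ∅ with hP
  have hPne : ∀ T ∈ P, T.Nonempty := by
    intro T hT
    exact nonempty_iff_ne_empty.2 (mem_erase.1 hT).1
  have hdecomp : v = fun S => ∑ T ∈ P, shapCoef v T * shapUnan T S :=
    funext fun S => shapAux_decomp v hv0 S
  have hmatch : ∀ T ∈ P, shapCoef v T * ψ (shapUnan T) j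
      = shapCoef v T * shapley d (shapUnan T) j := by
    intro T hT
    congr 1
    by_cases hj : j ∈ T
    · rw [psi_unan_mem ψ heff hnull hsym T j hj, shapley_unan_mem T j hj]
    · rw [psi_unan_not_mem ψ hnull T (hPne T hT) j hj, shapley_unan_not_mem T j hj]
  calc ψ v j = ψ (fun S => ∑ T ∈ P, shapCoef v T * shapUnan T S) j := by rw [← hdecomp]
    _ = ∑ T ∈ P, shapCoef v T * ψ (shapUnan T) j := psi_sum ψ hlin P hPne _ j
    _ = ∑ T ∈ P, shapCoef v T * shapley d (shapUnan T) j := Finset.sum_congr rfl hmatch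
    _ = shapley d (fun S => ∑ T ∈ P, shapCoef v T * shapUnan T S) j := (shapley_sum P _ _ j).symm
    _ = shapley d v j := by rw [← hdecomp]
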